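/- Let k > 0 and let (d^n), (g^n), (h^n) be sequences of nonnegative reals satisfying (d^{n+1} - d^n)/k ≤ g^n d^n + h^n for all n ≥ 0. Suppose for a fixed r ∈ ℕ with t_r := kr > 0 there exist constants a₁, a₂, a₃ such that for every integer n₀ ≥ 0: k·∑_{n=n₀}^{n₀+r-1} g^n ≤ a₁, k·∑_{n=n₀}^{n₀+r-1} h^n ≤ a₂, and k·∑_{n=n₀}^{n₀+r-1} d^n ≤ a₃. Then for all n ≥ r, d^n ≤ (a₂ + a₃/t_r)·exp(a₁). -/

import Mathlib

open Finset

/-- Uniform discrete Gronwall lemma. -/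
theorem stmt_1 (k : ℝ) (hk : 0 < k) (d g h : ℕ → ℝ)
    (hd : ∀ n, 0 ≤ d n) (hg : ∀ n, 0 ≤ g n) (hh : ∀ n, 0 ≤ h n)
    (hrec : ∀ n, (d (n + 1) - d n) / k ≤ g n * d n + h n)
    (r : ℕ) (hr : 0 < r) (a₁ a₂ a₃ : ℝ)
    (hga : ∀ n₀ : ℕ, k * ∑ i ∈ range r, g (n₀ + i) ≤ a₁)
    (hha : ∀ n₀ : ℕ, k * ∑ i ∈ range r, h (n₀ + i) ≤ a₂)
    (hda : ∀ n₀ : ℕ, k * ∑ i ∈ range r, d (n₀ + i) ≤ a₃) :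
    ∀ n, r ≤ n → d n ≤ (a₂ + a₃ / (k * r)) * Real.exp a₁ := by
  -- iterated Gronwall step
  have key : ∀ m n, m ≤ n →
      d n ≤ (d m + ∑ j ∈ Ico m n, k * h j) * Real.exp (∑ j ∈ Ico m n, k * g j) := by
    intro m n hmn
    induction n with
    | zero =>
      have : m = 0 := Nat.le_zero.mp hmn
      subst this; simp
    | succ n ih =>
      rcases Nat.eq_or_lt_of_le hmn with heq | hlt
      · subst heq; simp
      · have hmn' : m ≤ n := Nat.lt_succ_iff.mp hlt
        have ih := ih hmn'
        have hstep : d (n + 1) ≤ (1 + k * g n) * d n + k * h n := by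
          have h1 := (div_le_iff₀ hk).mp (hrec n)
          nlinarith
        set Sg := ∑ j ∈ Ico m n, k * g j with hSg
        set Sh := ∑ j ∈ Ico m n, k * h j with hSh
        have hSg0 : 0 ≤ Sg := Finset.sum_nonneg fun j _ => mul_nonneg hk.le (hg j)
        have hSh0 : 0 ≤ Sh := Finset.sum_nonneg fun j _ => mul_nonneg hk.le (hh j)
        have hsumg : ∑ j ∈ Ico m (n + 1), k * g j = Sg + k * g n :=
          Finset.sum_Ico_succ_top hmn' _
        have hsumh : ∑ j ∈ Ico m (n + 1), k * h j = Sh + k * h n :=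
          Finset.sum_Ico_succ_top hmn' _
        rw [hsumg, hsumh]
        have hexp : Real.exp (Sg + k * g n) = Real.exp Sg * Real.exp (k * g n) :=
          Real.exp_add _ _
        have h1 : (1 : ℝ) + k * g n ≤ Real.exp (k * g n) := by linarith [Real.add_one_le_exp (k * g n)]
        have hgn : 0 ≤ k * g n := mul_nonneg hk.le (hg n)
        have hhn : 0 ≤ k * h n := mul_nonneg hk.le (hh n)
        have hnn : 0 ≤ d m + Sh := by linarith [hd m]
        have hexp1 : (1 : ℝ) ≤ Real.exp (Sg + k * g n) :=
          Real.one_le_exp (by linarith)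
        calc d (n + 1) ≤ (1 + k * g n) * d n + k * h n := hstep
          _ ≤ (1 + k * g n) * ((d m + Sh) * Real.exp Sg) + k * h n := by
              have : 0 ≤ 1 + k * g n := by linarith
              nlinarith
          _ ≤ Real.exp (k * g n) * ((d m + Sh) * Real.exp Sg) + k * h n := by
              have h2 : 0 ≤ (d m + Sh) * Real.exp Sg := by positivity
              nlinarith
          _ = (d m + Sh) * Real.exp (Sg + k * g n) + k * h n := by
              rw [hexp]; ring
          _ ≤ (d m + Sh + k * h n) * Real.exp (Sg + k * g n) := by
              nlinarith
          _ = (d m + (Sh + k * h n)) * Real.exp (Sg + k * g n) := by ring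
  intro n hn
  set n₀ := n - r with hn0
  have hn' : n = n₀ + r := by omega
  have ha₁ : 0 ≤ a₁ := le_trans (mul_nonneg hk.le (Finset.sum_nonneg fun i _ => hg (0 + i))) (hga 0)
  have ha₂ : 0 ≤ a₂ := le_trans (mul_nonneg hk.le (Finset.sum_nonneg fun i _ => hh (0 + i))) (hha 0)
  have hwin : ∀ i ∈ range r, d n ≤ (d (n₀ + i) + a₂) * Real.exp a₁ := by
    intro i hi
    have hi' : i < r := mem_range.mp hi
    have hle : n₀ + i ≤ n := by omega
    have hkey := key (n₀ + i) n hle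
    have hsub : Ico (n₀ + i) n ⊆ Ico n₀ (n₀ + r) := by
      apply Finset.Ico_subset_Ico (by omega) (by omega)
    have hSg : ∑ j ∈ Ico (n₀ + i) n, k * g j ≤ a₁ := by
      calc ∑ j ∈ Ico (n₀ + i) n, k * g j ≤ ∑ j ∈ Ico n₀ (n₀ + r), k * g j :=
            Finset.sum_le_sum_of_subset_of_nonneg hsub (fun j _ _ => mul_nonneg hk.le (hg j))
        _ = k * ∑ i ∈ range r, g (n₀ + i) := by
            rw [Finset.sum_Ico_eq_sum_range, Finset.mul_sum]
            simp [Nat.add_sub_cancel_left]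
        _ ≤ a₁ := hga n₀
    have hSh : ∑ j ∈ Ico (n₀ + i) n, k * h j ≤ a₂ := by
      calc ∑ j ∈ Ico (n₀ + i) n, k * h j ≤ ∑ j ∈ Ico n₀ (n₀ + r), k * h j :=
            Finset.sum_le_sum_of_subset_of_nonneg hsub (fun j _ _ => mul_nonneg hk.le (hh j))
        _ = k * ∑ i ∈ range r, h (n₀ + i) := by
            rw [Finset.sum_Ico_eq_sum_range, Finset.mul_sum]
            simp [Nat.add_sub_cancel_left]
        _ ≤ a₂ := hha n₀
    have hSh0 : 0 ≤ ∑ j ∈ Ico (n₀ + i) n, k * h j :=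
      Finset.sum_nonneg fun j _ => mul_nonneg hk.le (hh j)
    calc d n ≤ (d (n₀ + i) + ∑ j ∈ Ico (n₀ + i) n, k * h j) *
            Real.exp (∑ j ∈ Ico (n₀ + i) n, k * g j) := hkey
      _ ≤ (d (n₀ + i) + a₂) * Real.exp a₁ := by
          apply mul_le_mul (by linarith) (Real.exp_le_exp.mpr hSg)
            (Real.exp_pos _).le (by linarith [hd (n₀ + i)])
  have hsum : (r : ℝ) * d n ≤ (∑ i ∈ range r, d (n₀ + i) + r * a₂) * Real.exp a₁ := by
    have := Finset.sum_le_sum hwin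
    simp only [Finset.sum_const, Finset.card_range, nsmul_eq_mul] at this
    calc (r : ℝ) * d n ≤ ∑ i ∈ range r, (d (n₀ + i) + a₂) * Real.exp a₁ := this
      _ = (∑ i ∈ range r, d (n₀ + i) + r * a₂) * Real.exp a₁ := by
          simp only [add_mul, Finset.sum_add_distrib, Finset.sum_const,
            Finset.card_range, nsmul_eq_mul, ← Finset.sum_mul]
          ring
  have hdsum : ∑ i ∈ range r, d (n₀ + i) ≤ a₃ / k := by
    rw [le_div_iff₀ hk]
    have := hda n₀
    linarith [this]
  have hrpos : (0 : ℝ) < r := by exact_mod_cast hr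
  rw [← mul_le_mul_iff_right₀ hrpos]
  calc (r : ℝ) * d n ≤ (∑ i ∈ range r, d (n₀ + i) + r * a₂) * Real.exp a₁ := hsum
    _ ≤ (a₃ / k + r * a₂) * Real.exp a₁ := by
        apply mul_le_mul_of_nonneg_right (by linarith) (Real.exp_pos _).le
    _ = (r : ℝ) * ((a₂ + a₃ / (k * r)) * Real.exp a₁) := by
        field_simp; ring
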